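/- arXiv:1603.06272 — 8 statements merged into one kernel-verified Lean document; each statement's English description precedes it below -/
import Mathlib

section
/- Let Γ = ⟨g₁,…,g_N⟩ be a discrete group with its dual embedded in U_N⁺ via the diagonal representation u = diag(g₁,…,g_N), and let Q ∈ U_N be a unitary matrix. Then the relations v_{ij} = 0 for all i ≠ j, where v = QuQ*, are equivalent to the relations: g_i = g_j whenever there exists k with Q_{ki} ≠ 0 and Q_{kj} ≠ 0. Hence Γ_Q = Γ / ⟨g_i = g_j | ∃k, Q_{ki} ≠ 0 and Q_{kj} ≠ 0⟩. -/
open Matrix MonoidAlgebra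

/-- For a discrete group `Γ` generated by `g 1, …, g N`, embedded diagonally
via `u = diag(g₁,…,g_N)` over the group algebra, and `Q ∈ U_N`, the relations
`(QuQ*)_{ij} = 0` for `i ≠ j` hold iff `g i = g j` whenever some row `k` of `Q` has
`Q k i ≠ 0` and `Q k j ≠ 0`. -/
theorem stmt0 {N : ℕ} (Γ : Type*) [Group Γ] (g : Fin N → Γ)
    (Q : Matrix (Fin N) (Fin N) ℂ) (hQ : Q ∈ Matrix.unitaryGroup (Fin N) ℂ)
    (ι : Matrix (Fin N) (Fin N) ℂ → Matrix (Fin N) (Fin N) (MonoidAlgebra ℂ Γ))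
    (hι : ι = fun M => M.map (algebraMap ℂ (MonoidAlgebra ℂ Γ)))
    (u v : Matrix (Fin N) (Fin N) (MonoidAlgebra ℂ Γ))
    (hu : u = Matrix.diagonal fun i => MonoidAlgebra.of ℂ Γ (g i))
    (hv : v = ι Q * u * ι Qᴴ) :
    (∀ i j, i ≠ j → v i j = 0) ↔
      (∀ k i j, Q k i ≠ 0 → Q k j ≠ 0 → g i = g j) := by
  classical
  have hQ1 : Qᴴ * Q = 1 := hQ.1
  have hQ2 : Q * Qᴴ = 1 := hQ.2
  have hventry : ∀ a b, v a b =
      ∑ m, MonoidAlgebra.single (g m) (Q a m * star (Q b m)) := by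
    intro a b
    simp only [hv, hι, hu]
    simp only [Matrix.mul_apply, Matrix.diagonal_apply, Matrix.map_apply,
      Matrix.conjTranspose_apply, MonoidAlgebra.of_apply, ite_mul, mul_ite,
      zero_mul, mul_zero, Finset.sum_ite_eq', Finset.mem_univ, if_true]
    refine Finset.sum_congr rfl fun m _ => ?_
    simp [MonoidAlgebra.coe_algebraMap, MonoidAlgebra.single_mul_single, mul_comm]
  have hcoeff : ∀ a b (h : Γ), (v a b).coeff h =
      ∑ m, if g m = h then Q a m * star (Q b m) else 0 := by
    intro a b h
    rw [hventry, MonoidAlgebra.coeff_sum, Finsupp.finset_sum_apply]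
    exact Finset.sum_congr rfl fun m _ => Finsupp.single_apply
  constructor
  · intro hvz k i j hQki hQkj
    by_contra hne
    set E : Γ → Matrix (Fin N) (Fin N) ℂ := fun h =>
      Q * (Matrix.diagonal fun m => if g m = h then (1:ℂ) else 0) * Qᴴ with hE
    have hEentry : ∀ (h : Γ) a b, E h a b =
        ∑ m, if g m = h then Q a m * star (Q b m) else 0 := by
      intro h a b
      simp only [hE, Matrix.mul_apply, Matrix.diagonal_apply,
        Matrix.conjTranspose_apply, ite_mul, mul_ite, mul_one, mul_zero, zero_mul,
        Finset.sum_ite_eq', Finset.mem_univ, if_true]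
    have hEzero : ∀ (h : Γ) a b, a ≠ b → E h a b = 0 := by
      intro h a b hab
      rw [hEentry, ← hcoeff, hvz a b hab]
      simp
    have hEmul : ∀ h h' : Γ, h ≠ h' → E h * E h' = 0 := by
      intro h h' hhh
      have e1 : E h * E h' = Q * ((Matrix.diagonal fun m => if g m = h then (1:ℂ) else 0)
          * (Qᴴ * Q) * (Matrix.diagonal fun m => if g m = h' then (1:ℂ) else 0)) * Qᴴ := by
        simp only [hE, Matrix.mul_assoc]
      rw [e1, hQ1, mul_one, Matrix.diagonal_mul_diagonal]
      have e2 : (fun m => (if g m = h then (1:ℂ) else 0) * (if g m = h' then (1:ℂ) else 0))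
          = fun _ => (0:ℂ) := by
        funext m
        by_cases hm : g m = h <;> by_cases hm' : g m = h' <;> simp_all
      rw [e2]
      simp
    have hdiagpos : ∀ (m : Fin N), Q k m ≠ 0 → E (g m) k k ≠ 0 := by
      intro m hm
      rw [hEentry]
      have e3 : ∀ l, (if g l = g m then Q k l * star (Q k l) else 0)
          = ((if g l = g m then Complex.normSq (Q k l) else 0 : ℝ) : ℂ) := by
        intro l
        by_cases hl : g l = g m <;> simp [hl, Complex.mul_conj]
      rw [Finset.sum_congr rfl fun l _ => e3 l, ← Complex.ofReal_sum]
      have hpos : (0:ℝ) < ∑ l, if g l = g m then Complex.normSq (Q k l) else 0 := by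
        refine Finset.sum_pos' (fun l _ => by split_ifs <;> simp [Complex.normSq_nonneg]) ⟨m, Finset.mem_univ m, ?_⟩
        simp [Complex.normSq_pos.2 hm]
      exact_mod_cast hpos.ne'
    have h2 : (E (g i) * E (g j)) k k = 0 := by rw [hEmul _ _ hne]; rfl
    rw [Matrix.mul_apply, Finset.sum_eq_single k
      (fun a _ ha => by rw [hEzero _ k a (Ne.symm ha), zero_mul])
      (fun h => absurd (Finset.mem_univ k) h)] at h2
    rcases mul_eq_zero.1 h2 with h3 | h3
    · exact hdiagpos i hQki h3
    · exact hdiagpos j hQkj h3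
  · intro hrel i j hij
    rw [hventry]
    ext h
    rw [MonoidAlgebra.coeff_sum, Finsupp.finset_sum_apply, Finset.sum_congr rfl fun m _ => by rw [MonoidAlgebra.coeff_single, Finsupp.single_apply]]
    rw [MonoidAlgebra.coeff_zero, Finsupp.coe_zero, Pi.zero_apply]
    by_cases hex : ∃ m₀, g m₀ = h ∧ Q i m₀ ≠ 0 ∧ Q j m₀ ≠ 0
    · obtain ⟨m₀, hgm₀, hi₀, hj₀⟩ := hex
      have e4 : ∀ m ∈ Finset.univ, (if g m = h then Q i m * star (Q j m) else 0)
          = Q i m * star (Q j m) := by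
        intro m _
        by_cases hgm : g m = h
        · simp [hgm]
        · rw [if_neg hgm]
          by_contra hc
          have hc' : Q i m * star (Q j m) ≠ 0 := fun e => hc e.symm
          have him : Q i m ≠ 0 := left_ne_zero_of_mul hc'
          exact hgm ((hrel i m₀ m hi₀ him).symm.trans hgm₀)
      rw [Finset.sum_congr rfl e4]
      have e5 : ∑ m, Q i m * star (Q j m) = (Q * Qᴴ) i j := by
        simp [Matrix.mul_apply, Matrix.conjTranspose_apply]
      rw [e5, hQ2, Matrix.one_apply_ne hij]
    · refine Finset.sum_eq_zero fun m _ => ?_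
      by_cases hgm : g m = h
      · rw [if_pos hgm]
        by_contra hc
        exact hex ⟨m, hgm, left_ne_zero_of_mul hc,
          fun e => hc (by simp [e])⟩
      · rw [if_neg hgm]
end

section
/- Let Q ∈ U_N be a unitary matrix and let g₁,…,g_N be elements of a group G. For the diagonal matrix w = diag(g₁,…,g_N) viewed inside the group algebra, the condition that QwQ* has vanishing off-diagonal entries implies: for all i, k with Q_{ki} ≠ 0, the element g_i equals the diagonal entry (QwQ*)_{kk}; consequently Q_{ki} ≠ 0 and Q_{kj} ≠ 0 imply g_i = g_j. -/
open Matrix MonoidAlgebra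

/-- If `w = diag(g₁,…,g_N)` over the group algebra and `Q` is unitary with
`QwQ*` having vanishing off-diagonal entries, then for all `i, k` with `Q k i ≠ 0` the
element `g i` equals the diagonal entry `(QwQ*)_{kk}` (as elements of the group algebra);
consequently `Q k i ≠ 0` and `Q k j ≠ 0` imply `g i = g j`. -/
theorem stmt1 {N : ℕ} (G : Type*) [Group G] (g : Fin N → G)
    (Q : Matrix (Fin N) (Fin N) ℂ) (hQ : Q ∈ Matrix.unitaryGroup (Fin N) ℂ)
    (ι : Matrix (Fin N) (Fin N) ℂ → Matrix (Fin N) (Fin N) (MonoidAlgebra ℂ G))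
    (hι : ι = fun M => M.map (algebraMap ℂ (MonoidAlgebra ℂ G)))
    (w v : Matrix (Fin N) (Fin N) (MonoidAlgebra ℂ G))
    (hw : w = Matrix.diagonal fun i => MonoidAlgebra.of ℂ G (g i))
    (hv : v = ι Q * w * ι Qᴴ)
    (hoff : ∀ i j, i ≠ j → v i j = 0) :
    (∀ i k, Q k i ≠ 0 → v k k = MonoidAlgebra.of ℂ G (g i)) ∧
      (∀ i j k, Q k i ≠ 0 → Q k j ≠ 0 → g i = g j) := by
  have hunit : Qᴴ * Q = 1 := by
    have h := hQ.1
    rwa [Matrix.star_eq_conjTranspose] at h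
  have hmap : ι Qᴴ * ι Q = 1 := by
    rw [hι]
    simp only
    rw [← Matrix.map_mul, hunit]
    exact Matrix.map_one _ (map_zero _) (map_one _)
  have key : v * ι Q = ι Q * w := by
    rw [hv, mul_assoc, hmap, mul_one]
  have main : ∀ i k, Q k i ≠ 0 → v k k = MonoidAlgebra.of ℂ G (g i) := by
    intro i k hki
    have heq : (v * ι Q) k i = (ι Q * w) k i := by rw [key]
    have lhs : (v * ι Q) k i = v k k * algebraMap ℂ (MonoidAlgebra ℂ G) (Q k i) := by
      rw [Matrix.mul_apply, Finset.sum_eq_single k]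
      · rw [hι]; rfl
      · intro b _ hb
        rw [hoff k b (Ne.symm hb), zero_mul]
      · intro h; exact absurd (Finset.mem_univ k) h
    have rhs : (ι Q * w) k i
        = algebraMap ℂ (MonoidAlgebra ℂ G) (Q k i) * MonoidAlgebra.of ℂ G (g i) := by
      rw [hw, Matrix.mul_apply, Finset.sum_eq_single i]
      · rw [Matrix.diagonal_apply_eq, hι]; rfl
      · intro b _ hb
        rw [Matrix.diagonal_apply_ne _ hb, mul_zero]
      · intro h; exact absurd (Finset.mem_univ i) h
    rw [lhs, rhs] at heq
    rw [Algebra.algebraMap_eq_smul_one] at heq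
    rw [mul_smul_comm, mul_one, smul_mul_assoc, one_mul] at heq
    exact smul_right_injective (MonoidAlgebra ℂ G) hki heq
  refine ⟨main, fun i j k hki hkj => ?_⟩
  have := (main i k hki).symm.trans (main j k hkj)
  exact MonoidAlgebra.of_injective this
end

section
/- In the group algebra of the infinite dihedral group D_∞ = ℤ₂ * ℤ₂ with generators g, h, the element ρ = 2 + g + h generates a polynomial algebra: the powers ρ⁰, ρ¹, ρ², … are linearly independent over ℂ. -/
open MonoidAlgebra Matrix DihedralGroup Polynomial

def zI : ZMod 0 → ℤ := fun k => show ℤ from k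

lemma zI_add (i j : ZMod 0) : zI (i + j) = zI i + zI j := rfl
lemma zI_sub (i j : ZMod 0) : zI (i - j) = zI i - zI j := rfl
lemma zI_zero : zI (0 : ZMod 0) = 0 := rfl
lemma zI_one : zI (1 : ZMod 0) = 1 := rfl

noncomputable def fD (s : ℂ) : DihedralGroup 0 → Matrix (Fin 2) (Fin 2) ℂ
  | .r k => !![s ^ (2 * zI k), 0; 0, s ^ (-(2 * zI k))]
  | .sr k => !![0, s ^ (-(2 * zI k)); s ^ (2 * zI k), 0]

noncomputable def FD (s : ℂ) (hs : s ≠ 0) : DihedralGroup 0 →* Matrix (Fin 2) (Fin 2) ℂ where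
  toFun := fD s
  map_one' := by
    show fD s (.r 0) = 1
    simp [fD, zI_zero, Matrix.one_fin_two]
  map_mul' x y := by
    have key : ∀ a b : ℤ, s ^ (a + b) = s ^ a * s ^ b := fun a b => zpow_add₀ hs a b
    have key2 : ∀ a b : ℤ, s ^ (a - b) = s ^ a * (s ^ b)⁻¹ := fun a b => by
      rw [zpow_sub₀ hs, div_eq_mul_inv]
    rcases x with i | i <;> rcases y with j | j
    · rw [r_mul_r]
      show fD s (.r (i + j)) = _
      simp only [fD, zI_add, Matrix.mul_fin_two, mul_add, neg_add, key]
      norm_num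
    · rw [r_mul_sr]
      show fD s (.sr (j - i)) = _
      simp only [fD, zI_sub, Matrix.mul_fin_two, mul_sub, neg_sub, key2, key,
        _root_.zpow_neg]
      norm_num [mul_comm]
    · rw [sr_mul_r]
      show fD s (.sr (i + j)) = _
      simp only [fD, zI_add, Matrix.mul_fin_two, mul_add, neg_add, key, _root_.zpow_neg]
      norm_num
    · rw [sr_mul_sr]
      show fD s (.r (j - i)) = _
      simp only [fD, zI_sub, Matrix.mul_fin_two, mul_sub, neg_sub, key2, key,
        _root_.zpow_neg]
      norm_num [mul_comm]

noncomputable def phiD (s : ℂ) (hs : s ≠ 0) :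
    MonoidAlgebra ℂ (DihedralGroup 0) →ₐ[ℂ] Matrix (Fin 2) (Fin 2) ℂ :=
  MonoidAlgebra.lift ℂ (Matrix (Fin 2) (Fin 2) ℂ) (DihedralGroup 0) (FD s hs)

lemma phiD_rho (s : ℂ) (hs : s ≠ 0) :
    phiD s hs (2 + MonoidAlgebra.of ℂ (DihedralGroup 0) (DihedralGroup.sr 0)
        + MonoidAlgebra.of ℂ (DihedralGroup 0) (DihedralGroup.sr 1)) =
      !![2, 1 + s ^ (-2 : ℤ); 1 + s ^ (2 : ℤ), 2] := by
  rw [map_add, map_add, map_ofNat]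
  rw [show phiD s hs ((MonoidAlgebra.of ℂ (DihedralGroup 0)) (sr 0)) = fD s (.sr 0) from
    MonoidAlgebra.lift_of (FD s hs) (sr 0)]
  rw [show phiD s hs ((MonoidAlgebra.of ℂ (DihedralGroup 0)) (sr 1)) = fD s (.sr 1) from
    MonoidAlgebra.lift_of (FD s hs) (sr 1)]
  simp only [fD, zI_zero, zI_one]
  norm_num
  have h2 : (2 : Matrix (Fin 2) (Fin 2) ℂ) = !![2, 0; 0, 2] := by
    rw [show (2 : Matrix (Fin 2) (Fin 2) ℂ) = 1 + 1 from by norm_num, Matrix.one_fin_two]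
    norm_num
  rw [h2]
  ext a b
  fin_cases a <;> fin_cases b <;> simp <;> ring

lemma eigen (s : ℂ) (hs : s ≠ 0) :
    !![2, 1 + s ^ (-2 : ℤ); 1 + s ^ (2 : ℤ), 2] *ᵥ ![1, s] = (2 + s + s⁻¹) • ![1, s] := by
  funext i
  fin_cases i <;>
    simp [Matrix.mulVec, dotProduct, Fin.sum_univ_two, zpow_ofNat] <;>
    field_simp <;> ring

lemma eigen_pow (N : Matrix (Fin 2) (Fin 2) ℂ) (v : Fin 2 → ℂ) (lam : ℂ)
    (hN : N *ᵥ v = lam • v) (n : ℕ) : N ^ n *ᵥ v = lam ^ n • v := by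
  induction n with
  | zero => simp [Matrix.one_mulVec]
  | succ n ih =>
      rw [pow_succ', ← Matrix.mulVec_mulVec, ih, Matrix.mulVec_smul, hN, smul_smul, ← pow_succ]

lemma eigen_aeval (N : Matrix (Fin 2) (Fin 2) ℂ) (v : Fin 2 → ℂ) (lam : ℂ)
    (hN : N *ᵥ v = lam • v) (p : Polynomial ℂ) :
    (Polynomial.aeval N p) *ᵥ v = p.eval lam • v := by
  induction p using Polynomial.induction_on' with
  | add p q hp hq => rw [map_add, Matrix.add_mulVec, hp, hq, Polynomial.eval_add, add_smul]
  | monomial n a =>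
      rw [Polynomial.aeval_monomial, Polynomial.eval_monomial, ← Matrix.mulVec_mulVec,
        eigen_pow N v lam hN n]
      rw [Matrix.mulVec_smul]
      rw [show (algebraMap ℂ (Matrix (Fin 2) (Fin 2) ℂ)) a = a • 1 from
        Algebra.algebraMap_eq_smul_one a]
      rw [Matrix.smul_mulVec, Matrix.one_mulVec, smul_smul, mul_comm]

/-- In the group algebra of the infinite dihedral group
`D_∞ = ℤ₂ * ℤ₂ = DihedralGroup 0`, with order-two generators `g = sr 0`, `h = sr 1`,
the element `ρ = 2 + g + h` generates a polynomial algebra: its powers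
`ρ⁰, ρ¹, ρ², …` are linearly independent over `ℂ`. -/
theorem stmt7 (g h : DihedralGroup 0)
    (hg : g = DihedralGroup.sr 0) (hh : h = DihedralGroup.sr 1)
    (ρ : MonoidAlgebra ℂ (DihedralGroup 0))
    (hρ : ρ = 2 + MonoidAlgebra.of ℂ (DihedralGroup 0) g
        + MonoidAlgebra.of ℂ (DihedralGroup 0) h) :
    LinearIndependent ℂ (fun n : ℕ => ρ ^ n) := by
  have htr : Transcendental ℂ ρ := by
    rw [transcendental_iff]
    intro p hp
    have root : ∀ m : ℕ, p.IsRoot (2 + ((m : ℂ) + 1) + ((m : ℂ) + 1)⁻¹) := by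
      intro m
      have hs : ((m : ℂ) + 1) ≠ 0 := Nat.cast_add_one_ne_zero m
      have h1 : Polynomial.aeval (phiD ((m : ℂ) + 1) hs ρ) p = 0 := by
        rw [Polynomial.aeval_algHom_apply, hp, map_zero]
      rw [hρ, hg, hh, phiD_rho _ hs] at h1
      have h2 := eigen_aeval _ ![1, (m : ℂ) + 1] _ (eigen ((m : ℂ) + 1) hs) p
      rw [h1] at h2
      have h3 := congrFun h2.symm 0
      simpa [Matrix.zero_mulVec] using h3
    apply Polynomial.eq_zero_of_infinite_isRoot
    apply Set.infinite_of_injective_forall_mem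
      (f := fun m : ℕ => 2 + ((m : ℂ) + 1) + ((m : ℂ) + 1)⁻¹)
    · intro a b hab
      have ha : ((a : ℂ) + 1) ≠ 0 := Nat.cast_add_one_ne_zero a
      have hb : ((b : ℂ) + 1) ≠ 0 := Nat.cast_add_one_ne_zero b
      simp only at hab
      have key : (((a : ℂ) + 1) - ((b : ℂ) + 1)) * (((a : ℂ) + 1) * ((b : ℂ) + 1) - 1) = 0 := by
        field_simp at hab
        linear_combination hab
      rcases mul_eq_zero.mp key with hk | hk
      · have h4 : ((a : ℂ) + 1) = ((b : ℂ) + 1) := sub_eq_zero.mp hk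
        have : (a : ℂ) = (b : ℂ) := by linear_combination h4
        exact_mod_cast this
      · have h4 : ((a : ℂ) + 1) * ((b : ℂ) + 1) = 1 := by linear_combination hk
        have h5 : (((a + 1) * (b + 1) : ℕ) : ℂ) = ((1 : ℕ) : ℂ) := by push_cast; linear_combination h4
        have h6 : (a + 1) * (b + 1) = 1 := Nat.cast_injective h5
        have := Nat.eq_one_of_mul_eq_one_right h6
        have := Nat.eq_one_of_mul_eq_one_left h6
        omega
    · exact fun m => root m
  have hinj : Function.Injective (Polynomial.aeval ρ : Polynomial ℂ →ₐ[ℂ] _) :=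
    transcendental_iff_injective.mp htr
  have hli : LinearIndependent ℂ (fun n : ℕ => (Polynomial.X : Polynomial ℂ) ^ n) := by
    have hb := (Polynomial.basisMonomials ℂ).linearIndependent
    rw [Polynomial.coe_basisMonomials] at hb
    convert hb using 2 with n
    exact Polynomial.X_pow_eq_monomial n
  have hmap := hli.map' (Polynomial.aeval ρ).toLinearMap (LinearMap.ker_eq_bot.mpr hinj)
  convert hmap using 2 with n
  simp [map_pow]
  all_goals rfl
end

section
/- In the group algebra of the free product ℤ₂^{*N} = ℤ₂ * ⋯ * ℤ₂ (N ≥ 2 copies, generators g₁,…,g_N of order 2), the element ρ = g₁ + ⋯ + g_N generates a polynomial algebra: its powers are linearly independent over ℂ. -/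
open MonoidAlgebra

/-- Monoid hom from `Multiplicative (ZMod 2)` sending the generator to an involution. -/
def zhom {R : Type*} [Monoid R] (A : R) (h : A * A = 1) : Multiplicative (ZMod 2) →* R where
  toFun x := if x = 1 then 1 else A
  map_one' := if_pos rfl
  map_mul' x y := by
    have key : ∀ u : Multiplicative (ZMod 2), u = 1 ∨ u = Multiplicative.ofAdd 1 := by decide
    have hne : (Multiplicative.ofAdd (1 : ZMod 2)) ≠ 1 := by decide
    have hsq : (Multiplicative.ofAdd (1 : ZMod 2)) * Multiplicative.ofAdd 1 = 1 := by decide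
    rcases key x with rfl | rfl <;> rcases key y with rfl | rfl <;>
      simp [hne, hsq, h]

lemma zhom_gen {R : Type*} [Monoid R] (A : R) (h : A * A = 1) :
    zhom A h (Multiplicative.ofAdd (1 : ZMod 2)) = A := by
  have hne : (Multiplicative.ofAdd (1 : ZMod 2)) ≠ 1 := by decide
  simp [zhom, hne]

/-- In the group algebra of the free product `ℤ₂^{*N}` of `N ≥ 2` copies of
`ℤ₂`, with generators `g i` (the images of the nontrivial elements of the factors),
the element `ρ = g₁ + ⋯ + g_N` generates a polynomial algebra: its powers are linearly
independent over `ℂ`. -/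
theorem stmt8 {N : ℕ} (hN : 2 ≤ N)
    (g : Fin N → Monoid.CoprodI (fun _ : Fin N => Multiplicative (ZMod 2)))
    (hg : ∀ i, g i = Monoid.CoprodI.of (i := i) (Multiplicative.ofAdd (1 : ZMod 2)))
    (ρ : MonoidAlgebra ℂ (Monoid.CoprodI (fun _ : Fin N => Multiplicative (ZMod 2))))
    (hρ : ρ = ∑ i, MonoidAlgebra.of ℂ _ (g i)) :
    LinearIndependent ℂ (fun n : ℕ => ρ ^ n) := by
  classical
  haveI : NeZero N := ⟨by omega⟩
  rw [linearIndependent_iff]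
  intro l hl
  set c : ℂ := ((N - 1 : ℕ) : ℂ) with hc_def
  have hc : c ≠ 0 := by
    rw [hc_def]
    exact_mod_cast (by omega : (N - 1 : ℕ) ≠ 0)
  -- the even and odd parts of `l`, as polynomials
  set E : Polynomial ℂ :=
    ∑ n ∈ l.support, if Even n then Polynomial.C (l n) * Polynomial.X ^ (n / 2) else 0 with hE
  set O : Polynomial ℂ :=
    ∑ n ∈ l.support, if Even n then 0 else Polynomial.C (l n) * Polynomial.X ^ (n / 2) with hO
  -- coefficient identification
  have hEcoeff : ∀ m : ℕ, E.coeff m = l (2 * m) := by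
    intro m
    rw [hE, Polynomial.finset_sum_coeff]
    have step : ∀ n ∈ l.support,
        (if Even n then Polynomial.C (l n) * Polynomial.X ^ (n / 2) else 0).coeff m
          = if n = 2 * m then l n else 0 := by
      intro n _
      rcases Nat.even_or_odd n with he | ho
      · have h2 : n % 2 = 0 := Nat.even_iff.mp he
        rw [if_pos he, Polynomial.coeff_C_mul_X_pow]
        exact if_congr (by omega) rfl rfl
      · have h2 : n % 2 = 1 := Nat.odd_iff.mp ho
        rw [if_neg (by simp [Nat.even_iff, h2]), Polynomial.coeff_zero, eq_comm,
          if_neg (by omega)]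
    rw [Finset.sum_congr rfl step, Finset.sum_ite_eq' l.support (2 * m) l]
    by_cases h : 2 * m ∈ l.support
    · rw [if_pos h]
    · rw [if_neg h, eq_comm, Finsupp.notMem_support_iff.mp h]
  have hOcoeff : ∀ m : ℕ, O.coeff m = l (2 * m + 1) := by
    intro m
    rw [hO, Polynomial.finset_sum_coeff]
    have step : ∀ n ∈ l.support,
        (if Even n then 0 else Polynomial.C (l n) * Polynomial.X ^ (n / 2)).coeff m
          = if n = 2 * m + 1 then l n else 0 := by
      intro n _
      rcases Nat.even_or_odd n with he | ho
      · have h2 : n % 2 = 0 := Nat.even_iff.mp he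
        rw [if_pos he, Polynomial.coeff_zero, eq_comm, if_neg (by omega)]
      · have h2 : n % 2 = 1 := Nat.odd_iff.mp ho
        rw [if_neg (by simp [Nat.even_iff, h2]), Polynomial.coeff_C_mul_X_pow]
        exact if_congr (by omega) rfl rfl
    rw [Finset.sum_congr rfl step, Finset.sum_ite_eq' l.support (2 * m + 1) l]
    by_cases h : 2 * m + 1 ∈ l.support
    · rw [if_pos h]
    · rw [if_neg h, eq_comm, Finsupp.notMem_support_iff.mp h]
  -- key evaluation identities coming from 2×2 matrix representations
  have key : ∀ z : ℂ, z ≠ 0 →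
      E.eval ((1 + c * z⁻¹) * (1 + c * z)) = 0 ∧
      (1 + c * z) * O.eval ((1 + c * z⁻¹) * (1 + c * z)) = 0 := by
    intro z hz
    set p : ℂ := 1 + c * z⁻¹ with hp
    set q : ℂ := 1 + c * z with hq
    set r : ℂ := p * q with hr
    have hA : (!![(0 : ℂ), 1; 1, 0]) * !![(0 : ℂ), 1; 1, 0] = 1 := by
      ext i j
      fin_cases i <;> fin_cases j <;>
        simp [Matrix.mul_apply, Fin.sum_univ_two, Matrix.one_apply]
    have hB : (!![(0 : ℂ), z⁻¹; z, 0]) * !![(0 : ℂ), z⁻¹; z, 0] = 1 := by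
      ext i j
      fin_cases i <;> fin_cases j <;>
        simp [Matrix.mul_apply, Fin.sum_univ_two, Matrix.one_apply,
          inv_mul_cancel₀ hz, mul_inv_cancel₀ hz]
    set π : Monoid.CoprodI (fun _ : Fin N => Multiplicative (ZMod 2)) →*
        Matrix (Fin 2) (Fin 2) ℂ :=
      Monoid.CoprodI.lift (fun i =>
        if i = (0 : Fin N) then zhom _ hA else zhom _ hB) with hπ
    set Φ := (MonoidAlgebra.lift ℂ (Matrix (Fin 2) (Fin 2) ℂ) _) π with hΦ
    set M : Matrix (Fin 2) (Fin 2) ℂ := !![0, p; q, 0] with hMdef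
    have hπg : ∀ i : Fin N, π (g i) =
        if i = (0 : Fin N) then !![(0 : ℂ), 1; 1, 0] else !![(0 : ℂ), z⁻¹; z, 0] := by
      intro i
      rw [hg, hπ, Monoid.CoprodI.lift_of]
      by_cases h : i = (0 : Fin N)
      · rw [if_pos h, if_pos h, zhom_gen]
      · rw [if_neg h, if_neg h, zhom_gen]
    have hΦρ : Φ ρ = M := by
      rw [hρ, map_sum]
      have : ∀ i : Fin N, Φ (MonoidAlgebra.of ℂ _ (g i)) =
          (if i = (0 : Fin N) then !![(0 : ℂ), 1; 1, 0] else !![(0 : ℂ), z⁻¹; z, 0]) := by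
        intro i
        rw [hΦ, MonoidAlgebra.lift_of, hπg]
      rw [Finset.sum_congr rfl (fun i _ => this i)]
      have split : ∀ i : Fin N,
          (if i = (0 : Fin N) then !![(0 : ℂ), 1; 1, 0] else !![(0 : ℂ), z⁻¹; z, 0])
            = !![(0 : ℂ), z⁻¹; z, 0] +
              (if i = (0 : Fin N) then !![(0 : ℂ), 1; 1, 0] - !![(0 : ℂ), z⁻¹; z, 0] else 0) := by
        intro i
        by_cases h : i = (0 : Fin N) <;> simp [h]
      rw [Finset.sum_congr rfl (fun i _ => split i), Finset.sum_add_distrib,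
        Finset.sum_const, Finset.sum_ite_eq' Finset.univ (0 : Fin N),
        if_pos (Finset.mem_univ _), Finset.card_univ, Fintype.card_fin]
      ext i j
      fin_cases i <;> fin_cases j <;>
        simp [hMdef, hp, hq, hc_def, Matrix.smul_apply, Matrix.add_apply, nsmul_eq_mul] <;>
        push_cast [Nat.cast_sub (by omega : 1 ≤ N)] <;> ring
    -- powers of M
    have hM2 : M * M = r • (1 : Matrix (Fin 2) (Fin 2) ℂ) := by
      ext i j
      fin_cases i <;> fin_cases j <;>
        simp [hMdef, hr, Matrix.mul_apply, Fin.sum_univ_two, Matrix.one_apply, mul_comm]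
    have hpow : ∀ n : ℕ, M ^ n =
        if Even n then r ^ (n / 2) • (1 : Matrix (Fin 2) (Fin 2) ℂ) else r ^ (n / 2) • M := by
      intro n
      induction n with
      | zero => simp
      | succ n ih =>
        rw [pow_succ, ih]
        rcases Nat.even_or_odd n with he | ho
        · have h2 : n % 2 = 0 := Nat.even_iff.mp he
          rw [if_pos he, if_neg (by simp [Nat.even_iff, h2, Nat.add_mod]),
            Matrix.smul_mul, Matrix.one_mul]
          congr 2
          omega
        · have h2 : n % 2 = 1 := Nat.odd_iff.mp ho
          rw [if_neg (by simp [Nat.even_iff, h2]), if_pos (by simp [Nat.even_iff, h2, Nat.add_mod]),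
            Matrix.smul_mul, hM2, smul_smul]
          rw [show (n + 1) / 2 = n / 2 + 1 by omega, pow_succ]
    -- apply Φ to the dependence relation
    have H : (∑ n ∈ l.support, l n • M ^ n) = 0 := by
      have := congrArg Φ hl
      rw [map_zero, Finsupp.linearCombination_apply, Finsupp.sum, map_sum] at this
      rw [← this]
      refine Finset.sum_congr rfl fun n _ => ?_
      rw [map_smul, map_pow, hΦρ]
    constructor
    · have H00 := congrFun (congrFun H 0) 0
      rw [Matrix.sum_apply] at H00
      have : ∀ n ∈ l.support, (l n • M ^ n) 0 0 = if Even n then l n * r ^ (n / 2) else 0 := by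
        intro n _
        rcases Nat.even_or_odd n with he | ho
        · simp [hpow n, he, Matrix.one_apply]
        · rw [hpow n]
          simp [hpow n, Nat.not_even_iff_odd.mpr ho, hMdef]
      rw [Finset.sum_congr rfl this, Matrix.zero_apply] at H00
      rw [hE, Polynomial.eval_finset_sum]
      rw [← H00]
      refine Finset.sum_congr rfl fun n _ => ?_
      rcases Nat.even_or_odd n with he | ho
      · rw [if_pos he, if_pos he, Polynomial.eval_mul, Polynomial.eval_C, Polynomial.eval_pow,
          Polynomial.eval_X]
      · rw [if_neg (Nat.not_even_iff_odd.mpr ho), if_neg (Nat.not_even_iff_odd.mpr ho),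
          Polynomial.eval_zero]
    · have H10 := congrFun (congrFun H 1) 0
      rw [Matrix.sum_apply] at H10
      have : ∀ n ∈ l.support, (l n • M ^ n) 1 0
          = if Even n then 0 else l n * (r ^ (n / 2) * q) := by
        intro n _
        rcases Nat.even_or_odd n with he | ho
        · simp [hpow n, he, Matrix.one_apply]
        · rw [hpow n]
          simp [hpow n, Nat.not_even_iff_odd.mpr ho, hMdef]
      rw [Finset.sum_congr rfl this, Matrix.zero_apply] at H10
      rw [hO, Polynomial.eval_finset_sum, Finset.mul_sum, ← H10]
      refine Finset.sum_congr rfl fun n _ => ?_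
      rcases Nat.even_or_odd n with he | ho
      · rw [if_pos he, if_pos he, Polynomial.eval_zero, mul_zero]
      · rw [if_neg (Nat.not_even_iff_odd.mpr ho), if_neg (Nat.not_even_iff_odd.mpr ho),
          Polynomial.eval_mul, Polynomial.eval_C, Polynomial.eval_pow, Polynomial.eval_X]
        ring
  -- surjectivity of `z ↦ (1 + c z⁻¹)(1 + c z)` away from nothing
  have surj : ∀ w : ℂ, ∃ z : ℂ, z ≠ 0 ∧ (1 + c * z⁻¹) * (1 + c * z) = w := by
    intro w
    set s : ℂ := (w - 1 - c ^ 2) / c with hs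
    obtain ⟨t, ht⟩ := IsAlgClosed.exists_pow_nat_eq (k := ℂ) (s ^ 2 - 4) (n := 2) (by norm_num)
    refine ⟨(s + t) / 2, ?_, ?_⟩
    · have hinv : (s + t) / 2 * ((s - t) / 2) = 1 := by
        field_simp
        linear_combination -ht
      exact left_ne_zero_of_mul_eq_one hinv
    · have hinv : (s + t) / 2 * ((s - t) / 2) = 1 := by
        field_simp
        linear_combination -ht
      rw [inv_eq_of_mul_eq_one_right hinv]
      have hcs : c * s = w - 1 - c ^ 2 := by
        rw [hs]; field_simp
      linear_combination hcs - c ^ 2 / 4 * ht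
  -- E = 0
  have hE0 : E = 0 := by
    apply Polynomial.funext
    intro w
    obtain ⟨z, hz, hzw⟩ := surj w
    rw [Polynomial.eval_zero, ← hzw]
    exact (key z hz).1
  -- O = 0
  have hO0 : O = 0 := by
    apply Polynomial.eq_zero_of_infinite_isRoot
    apply Set.Infinite.mono (s := {x : ℂ | x ≠ 0})
    · intro w hw
      obtain ⟨z, hz, hzw⟩ := surj w
      have hq : (1 + c * z) ≠ 0 := by
        intro h
        apply hw
        rw [← hzw, h, mul_zero]
      have := (key z hz).2
      rw [hzw] at this
      exact (mul_eq_zero.mp this).resolve_left hq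
    · have : ({(0 : ℂ)}ᶜ : Set ℂ).Infinite := (Set.finite_singleton 0).infinite_compl
      convert this using 1
      ext x; simp
  -- conclude
  ext n
  rcases Nat.even_or_odd n with he | ho
  · obtain ⟨k, rfl⟩ := he
    have := hEcoeff k
    rw [hE0, Polynomial.coeff_zero] at this
    rw [show k + k = 2 * k by omega]
    exact this.symm
  · obtain ⟨k, rfl⟩ := ho
    have := hOcoeff k
    rw [hO0, Polynomial.coeff_zero] at this
    exact this.symm
end

section
/- In the group algebra of the free group F_N (N ≥ 2) with generators g₁,…,g_N, the element ρ = g₁ + ⋯ + g_N generates a *-polynomial algebra: the set of all words in ρ and ρ* = g₁⁻¹ + ⋯ + g_N⁻¹ are linearly independent over ℂ. -/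
open MonoidAlgebra


open FreeGroup

namespace Stmt9Aux

/-- A `Red` that does not decrease length is trivial. -/
lemma red_eq {α : Type*} [DecidableEq α] {L₁ L₂ : List (α × Bool)} (h : FreeGroup.Red L₁ L₂)
    (hl : L₁.length ≤ L₂.length) : L₁ = L₂ := by
  rcases Relation.ReflTransGen.cases_head h with rfl | ⟨c, hstep, hred⟩
  · rfl
  · have h1 := hstep.length
    have h2 := FreeGroup.Red.length_le hred
    omega

lemma mul_single_eq {α : Type*} [DecidableEq α] (c : α × Bool) (y : FreeGroup α) :
    FreeGroup.mk [c] * y = FreeGroup.mk (c :: y.toWord) := by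
  conv_lhs => rw [← mk_toWord (x := y), FreeGroup.mul_mk]
  rfl

lemma toWord_cons_le {α : Type*} [DecidableEq α] (c : α × Bool) (y : FreeGroup α) :
    (FreeGroup.mk [c] * y).toWord.length ≤ y.toWord.length + 1 := by
  rw [mul_single_eq, FreeGroup.toWord_mk]
  have := FreeGroup.Red.length_le (FreeGroup.reduce.red (L := c :: y.toWord))
  simpa using this

lemma toWord_cons_eq {α : Type*} [DecidableEq α] (c : α × Bool) (y : FreeGroup α)
    (h : (FreeGroup.mk [c] * y).toWord.length = y.toWord.length + 1) :
    (FreeGroup.mk [c] * y).toWord = c :: y.toWord := by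
  have hm : (FreeGroup.mk [c] * y).toWord = FreeGroup.reduce (c :: y.toWord) := by
    rw [mul_single_eq, FreeGroup.toWord_mk]
  rw [hm]
  refine (red_eq (FreeGroup.reduce.red) ?_).symm
  rw [hm] at h
  rw [List.length_cons, h]

lemma toWord_cons_of_head {α : Type*} [DecidableEq α] (c : α × Bool) (y : FreeGroup α)
    (h : ∀ d ∈ y.toWord.head?, ¬(c.1 = d.1 ∧ c.2 = !d.2)) :
    (FreeGroup.mk [c] * y).toWord = c :: y.toWord := by
  have hm : (FreeGroup.mk [c] * y).toWord = FreeGroup.reduce (c :: y.toWord) := by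
    rw [mul_single_eq, FreeGroup.toWord_mk]
  rw [hm, FreeGroup.reduce.cons]
  rw [FreeGroup.reduce_toWord]
  cases hw : y.toWord with
  | nil => rfl
  | cons d t =>
    have hd := h d (by simp [hw])
    simp [hd]

def gen (N : ℕ) (b : Bool) (i : Fin N) : FreeGroup (Fin N) :=
  cond b (FreeGroup.of i) (FreeGroup.of i)⁻¹

lemma gen_eq_mk (N : ℕ) (b : Bool) (i : Fin N) : gen N b i = FreeGroup.mk [(i, b)] := by
  cases b with
  | true => rfl
  | false =>
    show (FreeGroup.of i)⁻¹ = _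
    rw [show (FreeGroup.of i) = FreeGroup.mk [(i, true)] from rfl, FreeGroup.inv_mk]
    rfl

noncomputable def Wd (N : ℕ) (w : List Bool) : MonoidAlgebra ℂ (FreeGroup (Fin N)) :=
  (w.map (fun b => ∑ i, MonoidAlgebra.single (gen N b i) (1 : ℂ))).prod

lemma Wd_apply (N : ℕ) (b : Bool) (l : List Bool) (m : FreeGroup (Fin N)) :
    (Wd N (b :: l)).coeff m = ∑ i, (Wd N l).coeff ((gen N b i)⁻¹ * m) := by
  show ((∑ i, MonoidAlgebra.single (gen N b i) (1 : ℂ)) * Wd N l).coeff m = _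
  rw [Finset.sum_mul]
  rw [MonoidAlgebra.coeff_sum, Finsupp.finset_sum_apply]
  simp [MonoidAlgebra.coeff_single_mul_apply]

lemma Wd_nat (N : ℕ) (w : List Bool) : ∀ m, ∃ n : ℕ, (Wd N w).coeff m = n := by
  induction w with
  | nil =>
    intro m
    refine ⟨if (1 : FreeGroup (Fin N)) = m then 1 else 0, ?_⟩
    show (1 : MonoidAlgebra ℂ (FreeGroup (Fin N))).coeff m = _
    rw [MonoidAlgebra.one_def, MonoidAlgebra.coeff_single, Finsupp.single_apply]
    split <;> simp
  | cons b l ih =>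
    choose f hf using ih
    intro m
    refine ⟨∑ i, f ((gen N b i)⁻¹ * m), ?_⟩
    rw [Wd_apply]
    push_cast
    simp [hf]

lemma Wd_key (N : ℕ) (w : List Bool) : ∀ m : FreeGroup (Fin N), (Wd N w).coeff m ≠ 0 →
    m.toWord.length ≤ w.length ∧
      (m.toWord.length = w.length → m.toWord.map Prod.snd = w) := by
  induction w with
  | nil =>
    intro m hm
    have hm1 : m = 1 := by
      by_contra h
      apply hm
      show (1 : MonoidAlgebra ℂ (FreeGroup (Fin N))).coeff m = 0
      rw [MonoidAlgebra.one_def, MonoidAlgebra.coeff_single, Finsupp.single_apply, if_neg (fun h' => h h'.symm)]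
    subst hm1
    simp [FreeGroup.toWord_one]
  | cons b l ih =>
    intro m hm
    rw [Wd_apply] at hm
    obtain ⟨i, hi⟩ := Finset.exists_ne_zero_of_sum_ne_zero hm
    obtain ⟨h1, h2⟩ := ih _ hi.2
    have hmy : m = FreeGroup.mk [(i, b)] * ((gen N b i)⁻¹ * m) := by
      rw [← gen_eq_mk, mul_inv_cancel_left]
    have hle := toWord_cons_le (α := Fin N) (i, b) ((gen N b i)⁻¹ * m)
    rw [← hmy] at hle
    constructor
    · simp only [List.length_cons]; omega
    · intro heq
      have hlen2 : ((gen N b i)⁻¹ * m).toWord.length = l.length := by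
        simp only [List.length_cons] at heq; omega
      have he : m.toWord = (i, b) :: ((gen N b i)⁻¹ * m).toWord := by
        conv_lhs => rw [hmy]
        apply toWord_cons_eq
        rw [← hmy]
        simp only [List.length_cons] at heq
        omega
      rw [he, List.map_cons, h2 hlen2]

lemma Wd_witness {N : ℕ} (hN : 2 ≤ N) (w : List Bool) :
    ∃ m : FreeGroup (Fin N), m.toWord.length = w.length ∧ (Wd N w).coeff m ≠ 0 := by
  induction w with
  | nil =>
    refine ⟨1, by simp [FreeGroup.toWord_one], ?_⟩
    show (1 : MonoidAlgebra ℂ (FreeGroup (Fin N))).coeff 1 ≠ 0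
    rw [MonoidAlgebra.one_def, MonoidAlgebra.coeff_single, Finsupp.single_apply, if_pos rfl]
    exact one_ne_zero
  | cons b l ih =>
    obtain ⟨m, hlen, hne⟩ := ih
    obtain ⟨i, hi⟩ : ∃ i : Fin N, ∀ d ∈ m.toWord.head?, ¬((i, b).1 = d.1 ∧ (i, b).2 = !d.2) := by
      cases hw : m.toWord.head? with
      | none => exact ⟨⟨0, by omega⟩, by simp [hw]⟩
      | some d =>
        refine ⟨if d.1 = ⟨0, by omega⟩ then ⟨1, by omega⟩ else ⟨0, by omega⟩, ?_⟩
        intro d' hd'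
        simp only [hw, Option.mem_some_iff] at hd'
        subst hd'
        rintro ⟨hh, -⟩
        split at hh <;> simp_all [Fin.ext_iff]
    refine ⟨gen N b i * m, ?_, ?_⟩
    · rw [gen_eq_mk, toWord_cons_of_head _ _ hi]
      simp [hlen]
    · choose f hf using Wd_nat N l
      rw [Wd_apply]
      have hterm : ∀ k : Fin N, (Wd N l).coeff ((gen N b k)⁻¹ * (gen N b i * m)) =
          (f ((gen N b k)⁻¹ * (gen N b i * m)) : ℂ) := fun k => hf _
      simp only [hterm]
      rw [← Nat.cast_sum]
      rw [Nat.cast_ne_zero]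
      intro hz
      rw [Finset.sum_eq_zero_iff] at hz
      have := hz i (Finset.mem_univ i)
      rw [inv_mul_cancel_left] at this
      apply hne
      rw [hf m, this, Nat.cast_zero]

end Stmt9Aux

open Stmt9Aux

/-- In the group algebra of the free group `F_N` (`N ≥ 2`) with generators
`g i`, the element `ρ = Σ g i` generates a `*`-polynomial algebra: the words in `ρ` and
`ρ* = Σ (g i)⁻¹` (finite products of these two elements, indexed by lists of booleans)
are linearly independent over `ℂ`. -/
theorem stmt9 {N : ℕ} (hN : 2 ≤ N)
    (ρ ρstar : MonoidAlgebra ℂ (FreeGroup (Fin N)))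
    (hρ : ρ = ∑ i, MonoidAlgebra.of ℂ (FreeGroup (Fin N)) (FreeGroup.of i))
    (hρstar : ρstar = ∑ i, MonoidAlgebra.of ℂ (FreeGroup (Fin N)) (FreeGroup.of i)⁻¹) :
    LinearIndependent ℂ
      (fun w : List Bool => (w.map (fun b => if b then ρ else ρstar)).prod) := by
  have hfun : (fun w : List Bool => (w.map (fun b => if b then ρ else ρstar)).prod)
      = Wd N := by
    funext w
    unfold Wd
    congr 1
    congr 1
    funext b
    cases b with
    | true => simp [hρ, gen, MonoidAlgebra.of_apply]
    | false => simp [hρstar, gen, MonoidAlgebra.of_apply]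
  rw [hfun, linearIndependent_iff']
  intro s g hsum w₀ hw₀
  by_contra hgw
  set t := s.filter (fun w => g w ≠ 0) with ht
  have htne : t.Nonempty := ⟨w₀, Finset.mem_filter.2 ⟨hw₀, hgw⟩⟩
  obtain ⟨u, hu, hmax⟩ := t.exists_max_image (fun w => w.length) htne
  have hus : u ∈ s := (Finset.mem_filter.1 hu).1
  have hgu : g u ≠ 0 := (Finset.mem_filter.1 hu).2
  obtain ⟨m, hm1, hm2⟩ := Wd_witness hN u
  have h0 : ∑ w' ∈ s, g w' * (Wd N w').coeff m = 0 := by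
    have h0' : (∑ w' ∈ s, g w' • Wd N w').coeff m = 0 := by rw [hsum]; rfl
    rw [MonoidAlgebra.coeff_sum, Finsupp.finset_sum_apply] at h0'
    simpa using h0'
  rw [Finset.sum_eq_single u] at h0
  · exact hgu (by simpa [hm2] using h0)
  · intro w' hw' hne
    by_cases hg : g w' = 0
    · simp [hg]
    by_cases hW : (Wd N w').coeff m = 0
    · simp [hW]
    exfalso
    have hw't : w' ∈ t := Finset.mem_filter.2 ⟨hw', hg⟩
    have hle : w'.length ≤ u.length := hmax w' hw't
    obtain ⟨hb, hr⟩ := Wd_key N w' m hW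
    have hlen : m.toWord.length = w'.length := by omega
    obtain ⟨-, hr2⟩ := Wd_key N u m hm2
    exact hne ((hr hlen).symm.trans (hr2 hm1))
  · intro h; exact absurd hus h
end

section
/- Let Q ∈ U_N, g₁,…,g_N elements of a group, v = diag(g₁,…,g_N), and u = QvQ*. For a linear map T : (ℂ^N)^{⊗k} → (ℂ^N)^{⊗l}, the relation T ∈ Hom(u^{⊗k}, u^{⊗l}) (i.e., T u^{⊗k} = u^{⊗l} T over the group algebra) is equivalent to T^Q ∈ Hom(v^{⊗k}, v^{⊗l}), where T^Q = (Q*)^{⊗l} T Q^{⊗k}, which in turn is equivalent to: (T^Q)_{j₁…j_l, i₁…i_k} ≠ 0 implies g_{i₁}⋯g_{i_k} = g_{j₁}⋯g_{j_l}. -/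
open Matrix MonoidAlgebra

/-- Entrywise tensor power of a square matrix: the matrix indexed by multi-indices, with
entry `M_{i₁j₁} ⋯ M_{i_k j_k}` (ordered product). -/
def tensorPow {N : ℕ} {A : Type*} [Monoid A] [AddCommMonoid A] [Mul A]
    (M : Matrix (Fin N) (Fin N) A) (k : ℕ) :
    Matrix (Fin k → Fin N) (Fin k → Fin N) A :=
  fun i j => (List.ofFn fun a => M (i a) (j a)).prod

lemma aux1 {R ι : Type*} [Fintype ι] [NonAssocSemiring R] :
    ∀ (m : ℕ) (f : Fin m → ι → R),
      (List.ofFn fun a => ∑ p : ι, f a p).prod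
        = ∑ p : Fin m → ι, (List.ofFn fun a => f a (p a)).prod := by
  intro m
  induction m with
  | zero => intro f; simp
  | succ m ih =>
    intro f
    rw [List.ofFn_succ, List.prod_cons, ih, Finset.sum_mul_sum,
      ← (Fin.consEquiv fun _ => ι).sum_comp
        (fun p : Fin (m+1) → ι => (List.ofFn fun a => f a (p a)).prod),
      Fintype.sum_prod_type]
    refine Finset.sum_congr rfl fun x _ => Finset.sum_congr rfl fun q _ => ?_
    rw [List.ofFn_succ, List.prod_cons]
    simp [Fin.consEquiv]

lemma aux2 {R : Type*} [Monoid R] :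
    ∀ (m : ℕ) (x y : Fin m → R), (∀ a r, Commute (x a) r) →
      (List.ofFn fun a => x a * y a).prod = (List.ofFn x).prod * (List.ofFn y).prod := by
  intro m
  induction m with
  | zero => intro x y _; simp
  | succ m ih =>
    intro x y hx
    rw [List.ofFn_succ, List.ofFn_succ (f := x), List.ofFn_succ (f := y),
      List.prod_cons, List.prod_cons, List.prod_cons,
      ih _ _ (fun a r => hx a.succ r)]
    have hc : Commute (y 0) (List.ofFn fun a : Fin m => x a.succ).prod := by
      refine (Commute.list_prod_right _ _ fun z hz => ?_)
      obtain ⟨a, rfl⟩ := List.mem_ofFn.mp hz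
      exact (hx a.succ (y 0)).symm
    calc x 0 * y 0 * ((List.ofFn fun a : Fin m => x a.succ).prod *
            (List.ofFn fun a : Fin m => y a.succ).prod)
        = x 0 * ((y 0 * (List.ofFn fun a : Fin m => x a.succ).prod) *
            (List.ofFn fun a : Fin m => y a.succ).prod) := by
          simp [mul_assoc]
      _ = _ := by rw [hc.eq]; simp [mul_assoc]

lemma aux2' {R : Type*} [Monoid R] :
    ∀ (m : ℕ) (x y : Fin m → R), (∀ a r, Commute (y a) r) →
      (List.ofFn fun a => x a * y a).prod = (List.ofFn x).prod * (List.ofFn y).prod := by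
  intro m
  induction m with
  | zero => intro x y _; simp
  | succ m ih =>
    intro x y hy
    rw [List.ofFn_succ, List.ofFn_succ (f := x), List.ofFn_succ (f := y),
      List.prod_cons, List.prod_cons, List.prod_cons,
      ih _ _ (fun a r => hy a.succ r)]
    have hc : Commute (y 0) (List.ofFn fun a : Fin m => x a.succ).prod := hy 0 _
    calc x 0 * y 0 * ((List.ofFn fun a : Fin m => x a.succ).prod *
            (List.ofFn fun a : Fin m => y a.succ).prod)
        = x 0 * ((y 0 * (List.ofFn fun a : Fin m => x a.succ).prod) *
            (List.ofFn fun a : Fin m => y a.succ).prod) := by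
          simp [mul_assoc]
      _ = _ := by rw [hc.eq]; simp [mul_assoc]

lemma tensorPow_mul_left {N : ℕ} {R : Type*} [Semiring R]
    (A B : Matrix (Fin N) (Fin N) R) (hA : ∀ i j r, Commute (A i j) r) (m : ℕ) :
    tensorPow (A * B) m = tensorPow A m * tensorPow B m := by
  funext i j
  show (List.ofFn fun a => (A * B) (i a) (j a)).prod = _
  simp only [Matrix.mul_apply]
  rw [aux1]
  refine Finset.sum_congr rfl fun p _ => ?_
  exact aux2 m _ _ (fun a r => hA (i a) (p a) r)

lemma tensorPow_mul_right {N : ℕ} {R : Type*} [Semiring R]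
    (A B : Matrix (Fin N) (Fin N) R) (hB : ∀ i j r, Commute (B i j) r) (m : ℕ) :
    tensorPow (A * B) m = tensorPow A m * tensorPow B m := by
  funext i j
  show (List.ofFn fun a => (A * B) (i a) (j a)).prod = _
  simp only [Matrix.mul_apply]
  rw [aux1]
  refine Finset.sum_congr rfl fun p _ => ?_
  exact aux2' m _ _ (fun a r => hB (p a) (j a) r)

lemma tensorPow_one {N : ℕ} {R : Type*} [Semiring R] (m : ℕ) :
    tensorPow (1 : Matrix (Fin N) (Fin N) R) m = 1 := by
  funext i j
  by_cases h : i = j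
  · subst h
    show (List.ofFn fun a => (1 : Matrix (Fin N) (Fin N) R) (i a) (i a)).prod = _
    simp [Matrix.one_apply]
  · show (List.ofFn fun a => (1 : Matrix (Fin N) (Fin N) R) (i a) (j a)).prod = _
    obtain ⟨a, ha⟩ : ∃ a, i a ≠ j a := by
      by_contra hc; push_neg at hc; exact h (funext hc)
    rw [Matrix.one_apply_ne h, List.prod_eq_zero]
    exact List.mem_ofFn.mpr ⟨a, by simp [Matrix.one_apply_ne ha]⟩

lemma tensorPow_map {N : ℕ} {R S : Type*} [Semiring R] [Semiring S]
    (f : R →+* S) (M : Matrix (Fin N) (Fin N) R) (m : ℕ) :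
    tensorPow (M.map f) m = (tensorPow M m).map f := by
  funext i j
  show (List.ofFn (f ∘ fun a => M (i a) (j a))).prod = f (List.ofFn fun a => M (i a) (j a)).prod
  rw [← List.map_ofFn, map_list_prod]

lemma tensorPow_diagonal {N : ℕ} {R : Type*} [Semiring R] (d : Fin N → R) (m : ℕ) :
    tensorPow (Matrix.diagonal d) m
      = Matrix.diagonal (fun i : Fin m → Fin N => (List.ofFn fun a => d (i a)).prod) := by
  funext i j
  by_cases h : i = j
  · subst h
    show (List.ofFn fun a => Matrix.diagonal d (i a) (i a)).prod = _
    simp [Matrix.diagonal_apply_eq]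
  · show (List.ofFn fun a => Matrix.diagonal d (i a) (j a)).prod = _
    obtain ⟨a, ha⟩ : ∃ a, i a ≠ j a := by
      by_contra hc; push_neg at hc; exact h (funext hc)
    rw [Matrix.diagonal_apply_ne _ h, List.prod_eq_zero]
    exact List.mem_ofFn.mpr ⟨a, by simp [Matrix.diagonal_apply_ne _ ha]⟩

lemma conj_iff {α β : Type*} [Fintype α] [Fintype β] [DecidableEq α] [DecidableEq β]
    {R : Type*} [Semiring R]
    (p p' : Matrix α α R) (q q' : Matrix β β R)
    (hpp' : p * p' = 1) (hp'p : p' * p = 1) (hqq' : q * q' = 1) (hq'q : q' * q = 1)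
    (t : Matrix β α R) (dk : Matrix α α R) (dl : Matrix β β R) :
    t * (p * dk * p') = q * dl * q' * t ↔ q' * t * p * dk = dl * (q' * t * p) := by
  have c1 : ∀ (X : Matrix β α R), q' * (q * X) = X := fun X => by
    rw [← Matrix.mul_assoc, hq'q, Matrix.one_mul]
  have c2 : ∀ (X : Matrix β α R), q * (q' * X) = X := fun X => by
    rw [← Matrix.mul_assoc, hqq', Matrix.one_mul]
  constructor
  · intro h
    have h2 := congrArg (fun X => q' * X * p) h
    simp only [Matrix.mul_assoc] at h2 ⊢
    simpa only [hp'p, hq'q, hpp', hqq', c1, c2, Matrix.mul_one] using h2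
  · intro h
    have h2 := congrArg (fun X => q * X * p') h
    simp only [Matrix.mul_assoc] at h2 ⊢
    simpa only [hp'p, hq'q, hpp', hqq', c1, c2, Matrix.mul_one] using h2

/-- With `v = diag(g₁,…,g_N)` over the group algebra, `Q ∈ U_N` and
`u = QvQ*`, a complex linear map `T` satisfies `T ∈ Hom(u^{⊗k}, u^{⊗l})` iff
`T^Q = (Q*)^{⊗l} T Q^{⊗k}` satisfies `T^Q ∈ Hom(v^{⊗k}, v^{⊗l})`, iff
`(T^Q)_{j,i} ≠ 0` implies `g_{i₁}⋯g_{i_k} = g_{j₁}⋯g_{j_l}`. -/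
theorem stmt11 {N : ℕ} (G : Type*) [Group G] (g : Fin N → G) (k l : ℕ)
    (Q : Matrix (Fin N) (Fin N) ℂ) (hQ : Q ∈ Matrix.unitaryGroup (Fin N) ℂ)
    (ι : ∀ {m : ℕ}, Matrix (Fin m → Fin N) (Fin m → Fin N) ℂ →
      Matrix (Fin m → Fin N) (Fin m → Fin N) (MonoidAlgebra ℂ G))
    (hι : ∀ {m : ℕ} (M : Matrix (Fin m → Fin N) (Fin m → Fin N) ℂ),
      ι M = M.map (algebraMap ℂ (MonoidAlgebra ℂ G)))
    (v u : Matrix (Fin N) (Fin N) (MonoidAlgebra ℂ G))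
    (hv : v = Matrix.diagonal fun i => MonoidAlgebra.of ℂ G (g i))
    (hu : u = Q.map (algebraMap ℂ (MonoidAlgebra ℂ G)) * v *
      Qᴴ.map (algebraMap ℂ (MonoidAlgebra ℂ G)))
    (T : Matrix (Fin l → Fin N) (Fin k → Fin N) ℂ)
    (TQ : Matrix (Fin l → Fin N) (Fin k → Fin N) ℂ)
    (hTQ : TQ = tensorPow Qᴴ l * T * tensorPow Q k) :
    ((T.map (algebraMap ℂ (MonoidAlgebra ℂ G)) * tensorPow u k =
        tensorPow u l * T.map (algebraMap ℂ (MonoidAlgebra ℂ G))) ↔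
      (TQ.map (algebraMap ℂ (MonoidAlgebra ℂ G)) * tensorPow v k =
        tensorPow v l * TQ.map (algebraMap ℂ (MonoidAlgebra ℂ G)))) ∧
    ((T.map (algebraMap ℂ (MonoidAlgebra ℂ G)) * tensorPow u k =
        tensorPow u l * T.map (algebraMap ℂ (MonoidAlgebra ℂ G))) ↔
      (∀ (i : Fin k → Fin N) (j : Fin l → Fin N), TQ j i ≠ 0 →
        (List.ofFn fun a => g (i a)).prod = (List.ofFn fun b => g (j b)).prod)) := by
  set φ := algebraMap ℂ (MonoidAlgebra ℂ G) with hφ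
  -- centrality of entries of mapped matrices
  have hcent : ∀ (M : Matrix (Fin N) (Fin N) ℂ) (i j : Fin N) (r : MonoidAlgebra ℂ G),
      Commute ((M.map φ) i j) r := fun M i j r => Algebra.commutes (M i j) r
  -- unitarity over ℂ and its tensor powers
  have hQ1 : Q * Qᴴ = 1 := by
    have := (Unitary.mem_iff.mp hQ).2; rwa [Matrix.star_eq_conjTranspose] at this
  have hQ2 : Qᴴ * Q = 1 := by
    have := (Unitary.mem_iff.mp hQ).1; rwa [Matrix.star_eq_conjTranspose] at this
  have htp1 : ∀ m, tensorPow Q m * tensorPow Qᴴ m = (1 : Matrix (Fin m → Fin N) _ ℂ) :=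
    fun m => by
      rw [← tensorPow_mul_left Q Qᴴ (fun _ _ _ => Commute.all _ _), hQ1, tensorPow_one]
  have htp2 : ∀ m, tensorPow Qᴴ m * tensorPow Q m = (1 : Matrix (Fin m → Fin N) _ ℂ) :=
    fun m => by
      rw [← tensorPow_mul_left Qᴴ Q (fun _ _ _ => Commute.all _ _), hQ2, tensorPow_one]
  -- mapped tensor powers over A
  have hmap1 : ∀ m, (tensorPow Q m).map φ * (tensorPow Qᴴ m).map φ
      = (1 : Matrix (Fin m → Fin N) _ (MonoidAlgebra ℂ G)) := fun m => by
    rw [← Matrix.map_mul, htp1, Matrix.map_one φ (map_zero φ) (map_one φ)]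
  have hmap2 : ∀ m, (tensorPow Qᴴ m).map φ * (tensorPow Q m).map φ
      = (1 : Matrix (Fin m → Fin N) _ (MonoidAlgebra ℂ G)) := fun m => by
    rw [← Matrix.map_mul, htp2, Matrix.map_one φ (map_zero φ) (map_one φ)]
  -- tensor power of u
  have hum : ∀ m, tensorPow u m
      = (tensorPow Q m).map φ * tensorPow v m * (tensorPow Qᴴ m).map φ := fun m => by
    rw [hu, tensorPow_mul_right _ (Qᴴ.map φ) (fun i j r => hcent Qᴴ i j r) m,
      tensorPow_mul_left (Q.map φ) v (fun i j r => hcent Q i j r) m,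
      tensorPow_map, tensorPow_map]
  -- mapped TQ
  have hTQm : TQ.map φ = (tensorPow Qᴴ l).map φ * T.map φ * (tensorPow Q k).map φ := by
    rw [hTQ, Matrix.map_mul, Matrix.map_mul]
  -- first equivalence
  have iff1 : (T.map φ * tensorPow u k = tensorPow u l * T.map φ) ↔
      (TQ.map φ * tensorPow v k = tensorPow v l * TQ.map φ) := by
    rw [hum k, hum l, hTQm]
    exact conj_iff _ _ _ _ (hmap1 k) (hmap2 k) (hmap1 l) (hmap2 l) _ _ _
  refine ⟨iff1, iff1.trans ?_⟩
  -- second equivalence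
  have hvd : ∀ m, tensorPow v m = Matrix.diagonal
      (fun i : Fin m → Fin N => MonoidAlgebra.of ℂ G (List.ofFn fun a => g (i a)).prod) := by
    intro m
    rw [hv, tensorPow_diagonal]
    have : (fun i : Fin m → Fin N => (List.ofFn fun a => MonoidAlgebra.of ℂ G (g (i a))).prod)
        = fun i : Fin m → Fin N => MonoidAlgebra.of ℂ G (List.ofFn fun a => g (i a)).prod := by
      funext i
      rw [show (List.ofFn fun a => MonoidAlgebra.of ℂ G (g (i a)))
          = List.ofFn ((MonoidAlgebra.of ℂ G) ∘ fun a => g (i a)) from rfl,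
        ← List.map_ofFn, map_list_prod]
    rw [this]
  have key : ∀ (c : ℂ) (h h' : G),
      (φ c * MonoidAlgebra.of ℂ G h = MonoidAlgebra.of ℂ G h' * φ c) ↔ (c ≠ 0 → h = h') := by
    intro c h h'
    have hφc : φ c = MonoidAlgebra.single (1 : G) c := by
      simp [hφ, MonoidAlgebra.coe_algebraMap]
    simp only [hφc, MonoidAlgebra.of_apply, MonoidAlgebra.single_mul_single,
      one_mul, mul_one]
    rw [MonoidAlgebra.single_inj]
    constructor
    · rintro (⟨rfl, -⟩ | ⟨h0, -⟩)
      · exact fun _ => rfl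
      · exact fun hc => absurd h0 hc
    · intro hc
      by_cases h0 : c = 0
      · exact Or.inr ⟨h0, h0⟩
      · exact Or.inl ⟨hc h0, rfl⟩
  rw [hvd k, hvd l, ← Matrix.ext_iff]
  simp only [Matrix.mul_diagonal, Matrix.diagonal_mul, Matrix.map_apply]
  constructor
  · intro H i j hij
    exact (key _ _ _).mp (H j i) hij
  · intro H j i
    exact (key _ _ _).mpr (fun hc => H i j hc)
end

section
/- Let H ⊆ U_N be a closed subgroup stable under entrywise complex conjugation, and let [H] be the compact matrix quantum group with C([H]) ⊆ M₂(C(H)) generated by the matrices u_{ij} = [[0, v_{ij}],[v̄_{ij}, 0]], where v_{ij} are the coordinate functions on H. Then each u_{ij} is self-adjoint, the u_{ij} satisfy the half-commutation relations abc = cba for a,b,c ∈ {u_{ij}}, and the matrix u = (u_{ij}) is orthogonal (u u^t = u^t u = 1). -/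
open Matrix

set_option maxHeartbeats 1000000
set_option synthInstance.maxHeartbeats 400000

theorem aux_zero2 {R : Type} [Zero R] :
    (!![0, 0; 0, 0] : Matrix (Fin 2) (Fin 2) R) = 0 := by
  ext x y
  fin_cases x <;> fin_cases y <;> rfl

theorem aux_half {R : Type} [CommRing R] (a b c a' b' c' : R) :
    (!![0, a; a', 0] : Matrix (Fin 2) (Fin 2) R) * !![0, b; b', 0] * !![0, c; c', 0]
      = !![0, c; c', 0] * !![0, b; b', 0] * !![0, a; a', 0] := by
  simp only [Matrix.mul_fin_two]
  ext x y
  fin_cases x <;> fin_cases y <;> simp <;> ring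

theorem aux_star {R : Type} [CommRing R] [StarRing R] (a : R) :
    star (!![0, a; star a, 0] : Matrix (Fin 2) (Fin 2) R) = !![0, a; star a, 0] := by
  ext x y
  fin_cases x <;> fin_cases y <;> simp [Matrix.conjTranspose_apply]

theorem aux_sum {N : ℕ} {R : Type} [CommRing R] (f g f' g' : Fin N → R) (S : R)
    (h1 : (∑ m, f m * g' m) = S) (h2 : (∑ m, g m * f' m) = S) :
    (∑ m, (!![0, f m; g m, 0] : Matrix (Fin 2) (Fin 2) R) * !![0, f' m; g' m, 0])
      = !![S, 0; 0, S] := by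
  ext x y
  rw [Matrix.sum_apply]
  fin_cases x <;> fin_cases y <;>
    simp [Matrix.mul_fin_two, Matrix.one_apply, h1, h2]

/-- Let `H ⊆ U_N` be a closed subgroup stable under entrywise complex
conjugation, with coordinate functions `v i j ∈ C(H)`, and in `M₂(C(H))` set
`u i j = [[0, v i j], [conj (v i j), 0]]`. Then each `u i j` is self-adjoint, the `u i j`
satisfy the half-commutation relations `a b c = c b a`, and the matrix `u = (u i j)` is
orthogonal: `Σ_k u i k * u j k = δ_{ij} = Σ_k u k i * u k j`. -/
theorem stmt14 {N : ℕ} (H : Subgroup (Matrix.unitaryGroup (Fin N) ℂ))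
    (hHclosed : IsClosed (H : Set (Matrix.unitaryGroup (Fin N) ℂ)))
    (hHconj : ∀ h : H, ∃ h' : H,
      ((h' : Matrix.unitaryGroup (Fin N) ℂ) : Matrix (Fin N) (Fin N) ℂ) =
        (((h : Matrix.unitaryGroup (Fin N) ℂ) : Matrix (Fin N) (Fin N) ℂ)).map
          (starRingEnd ℂ))
    (v : Fin N → Fin N → C(H, ℂ))
    (hv : ∀ i j (h : H), v i j h =
      ((h : Matrix.unitaryGroup (Fin N) ℂ) : Matrix (Fin N) (Fin N) ℂ) i j)
    (u : Fin N → Fin N → Matrix (Fin 2) (Fin 2) C(H, ℂ))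
    (hu : ∀ i j, u i j = !![0, v i j; star (v i j), 0]) :
    (∀ i j, star (u i j) = u i j) ∧
    (∀ i₁ j₁ i₂ j₂ i₃ j₃,
      u i₁ j₁ * u i₂ j₂ * u i₃ j₃ = u i₃ j₃ * u i₂ j₂ * u i₁ j₁) ∧
    (∀ i j, (∑ m, u i m * u j m) = if i = j then 1 else 0) ∧
    (∀ i j, (∑ m, u m i * u m j) = if i = j then 1 else 0) := by
  -- orthogonality relations at the level of C(H,ℂ), from unitarity of elements of H
  have key1 : ∀ i j, (∑ m, v i m * star (v j m)) = if i = j then 1 else 0 := by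
    intro i j
    ext h
    have hmem := ((h : Matrix.unitaryGroup (Fin N) ℂ)).prop
    rw [Matrix.mem_unitaryGroup_iff] at hmem
    have hentry := congrArg (fun M => M i j) hmem
    simp only [Matrix.mul_apply, Matrix.one_apply, star_eq_conjTranspose,
      Matrix.conjTranspose_apply] at hentry
    simp only [ContinuousMap.coe_sum, Finset.sum_apply, ContinuousMap.mul_apply,
      ContinuousMap.star_apply, hv]
    rw [hentry]
    split <;> simp
  have key2 : ∀ i j, (∑ m, star (v i m) * v j m) = if i = j then 1 else 0 := by
    intro i j
    rw [show (if i = j then (1 : C(H, ℂ)) else 0) = if j = i then 1 else 0 by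
      rcases eq_or_ne i j with rfl | hij
      · simp
      · simp [hij, Ne.symm hij]]
    simpa [mul_comm] using key1 j i
  have key3 : ∀ i j, (∑ m, v m i * star (v m j)) = if i = j then 1 else 0 := by
    intro i j
    ext h
    have hmem := ((h : Matrix.unitaryGroup (Fin N) ℂ)).prop
    rw [Matrix.mem_unitaryGroup_iff'] at hmem
    have hentry := congrArg (fun M => M j i) hmem
    simp only [Matrix.mul_apply, Matrix.one_apply, star_eq_conjTranspose,
      Matrix.conjTranspose_apply] at hentry
    simp only [ContinuousMap.coe_sum, Finset.sum_apply, ContinuousMap.mul_apply,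
      ContinuousMap.star_apply, hv]
    rw [show (∑ m, (((h : Matrix.unitaryGroup (Fin N) ℂ) : Matrix (Fin N) (Fin N) ℂ) m i
        * star (((h : Matrix.unitaryGroup (Fin N) ℂ) : Matrix (Fin N) (Fin N) ℂ) m j)))
        = ∑ m, star (((h : Matrix.unitaryGroup (Fin N) ℂ) : Matrix (Fin N) (Fin N) ℂ) m j)
        * (((h : Matrix.unitaryGroup (Fin N) ℂ) : Matrix (Fin N) (Fin N) ℂ) m i) from
        Finset.sum_congr rfl (fun m _ => mul_comm _ _), hentry]
    rcases eq_or_ne i j with rfl | hij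
    · simp
    · simp [hij, Ne.symm hij]
  have key4 : ∀ i j, (∑ m, star (v m i) * v m j) = if i = j then 1 else 0 := by
    intro i j
    rw [show (if i = j then (1 : C(H, ℂ)) else 0) = if j = i then 1 else 0 by
      rcases eq_or_ne i j with rfl | hij
      · simp
      · simp [hij, Ne.symm hij]]
    simpa [mul_comm] using key3 j i
  refine ⟨?_, ?_, ?_, ?_⟩
  · intro i j
    rw [hu]
    exact aux_star (v i j)
  · intro i₁ j₁ i₂ j₂ i₃ j₃
    rw [hu, hu, hu]
    exact aux_half _ _ _ _ _ _
  · intro i j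
    rcases eq_or_ne i j with rfl | hij
    · simp only [hu, if_pos rfl]
      rw [aux_sum (fun m => v i m) (fun m => star (v i m)) (fun m => v i m)
        (fun m => star (v i m)) 1 (by simpa using key1 i i) (by simpa using key2 i i)]
      exact Matrix.one_fin_two.symm
    · simp only [hu, if_neg hij]
      rw [aux_sum (fun m => v i m) (fun m => star (v i m)) (fun m => v j m)
        (fun m => star (v j m)) 0 (by simpa [hij] using key1 i j)
        (by simpa [hij] using key2 i j)]
      exact aux_zero2
  · intro i j
    rcases eq_or_ne i j with rfl | hij
    · simp only [hu, if_pos rfl]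
      rw [aux_sum (fun m => v m i) (fun m => star (v m i)) (fun m => v m i)
        (fun m => star (v m i)) 1 (by simpa using key3 i i) (by simpa using key4 i i)]
      exact Matrix.one_fin_two.symm
    · simp only [hu, if_neg hij]
      rw [aux_sum (fun m => v m i) (fun m => star (v m i)) (fun m => v m j)
        (fun m => star (v m j)) 0 (by simpa [hij] using key3 i j)
        (by simpa [hij] using key4 i j)]
      exact aux_zero2
end

section
/- For the Fourier matrix Q = F_N = (ξ^{jk}/√N)_{j,k=0}^{N-1} with ξ = e^{2πi/N}, and the quotient of the free group F_N defined by the relations: g_i = 1 if Σ_l Q_{il} ≠ 0, g_i g_j = 1 if Σ_l Q_{il}Q_{jl} ≠ 0, g_i g_j g_k = 1 if Σ_l Q_{il}Q_{jl}Q_{kl} ≠ 0, the resulting group is cyclic of order N, i.e., isomorphic to ℤ_N. -/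
open Complex

lemma stmt16_key (N : ℕ) [NeZero N] (ξ : ℂ) (hξ : ξ = Complex.exp (2 * Real.pi * I / N))
    (c : ZMod N) : (∑ l : ZMod N, ξ ^ (c * l).val) ≠ 0 ↔ c = 0 := by
  have hN : (N : ℂ) ≠ 0 := Nat.cast_ne_zero.mpr (NeZero.ne N)
  have hprim : IsPrimitiveRoot ξ N := by
    rw [hξ]; exact Complex.isPrimitiveRoot_exp N (NeZero.ne N)
  have hord : ξ ^ N = 1 := hprim.pow_eq_one
  constructor
  · intro h
    by_contra hc
    apply h
    have hvpos : 0 < c.val := by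
      rcases Nat.eq_zero_or_pos c.val with h0 | h0
      · exact absurd ((ZMod.val_eq_zero c).mp h0) hc
      · exact h0
    have hne : ξ ^ c.val ≠ 1 := by
      intro h1
      have hdvd := (hprim.pow_eq_one_iff_dvd c.val).mp h1
      have := Nat.le_of_dvd hvpos hdvd
      exact absurd (ZMod.val_lt c) (not_lt.mpr this)
    have hmod : ∀ m : ℕ, ξ ^ (m % N) = ξ ^ m := by
      intro m
      conv_rhs => rw [← Nat.div_add_mod m N]
      rw [pow_add, pow_mul, hord, one_pow, one_mul]
    have hchi : ∀ a b : ZMod N, ξ ^ a.val * ξ ^ b.val = ξ ^ (a + b).val := by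
      intro a b
      rw [← pow_add, ZMod.val_add, hmod]
    have hshift : ξ ^ c.val * (∑ l : ZMod N, ξ ^ (c * l).val)
        = ∑ l : ZMod N, ξ ^ (c * l).val := by
      rw [Finset.mul_sum]
      refine Fintype.sum_equiv (Equiv.addLeft (1 : ZMod N)) _ _ ?_
      intro l
      rw [hchi]
      congr 1
      simp [mul_add, mul_one]
    have := sub_eq_zero.mpr hshift
    have h2 : (ξ ^ c.val - 1) * (∑ l : ZMod N, ξ ^ (c * l).val) = 0 := by
      ring_nf; ring_nf at this; linear_combination this
    rcases mul_eq_zero.mp h2 with h3 | h3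
    · exact absurd (sub_eq_zero.mp h3) hne
    · exact h3
  · intro h
    subst h
    simp only [zero_mul, ZMod.val_zero, pow_zero, Finset.sum_const, Finset.card_univ,
      ZMod.card, nsmul_eq_mul, mul_one]
    exact hN

lemma stmt16_chi (N : ℕ) [NeZero N] (ξ : ℂ) (hord : ξ ^ N = 1) (a b : ZMod N) :
    ξ ^ a.val * ξ ^ b.val = ξ ^ (a + b).val := by
  have hmod : ∀ m : ℕ, ξ ^ (m % N) = ξ ^ m := by
    intro m
    conv_rhs => rw [← Nat.div_add_mod m N]
    rw [pow_add, pow_mul, hord, one_pow, one_mul]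
  rw [← pow_add, ZMod.val_add, hmod]

/-- For the rescaled Fourier matrix `Q j k = ξ^{jk}/√N`, `ξ = e^{2πi/N}`,
the quotient of the free group on generators `g i`, `i ∈ ℤ/N`, by the relations
`g i = 1` when `Σ_l Q i l ≠ 0`, `g i g j = 1` when `Σ_l Q i l * Q j l ≠ 0`, and
`g i g j g k = 1` when `Σ_l Q i l * Q j l * Q k l ≠ 0`, is cyclic of order `N`:
it is isomorphic to `ℤ_N`. -/
theorem stmt16 (N : ℕ) [NeZero N] (ξ : ℂ) (hξ : ξ = Complex.exp (2 * Real.pi * I / N))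
    (Q : ZMod N → ZMod N → ℂ) (hQ : ∀ j k, Q j k = ξ ^ (j * k).val / Real.sqrt N)
    (rels : Set (FreeGroup (ZMod N)))
    (hrels : rels =
      {w | ∃ i, (∑ l, Q i l) ≠ 0 ∧ w = FreeGroup.of i} ∪
      {w | ∃ i j, (∑ l, Q i l * Q j l) ≠ 0 ∧ w = FreeGroup.of i * FreeGroup.of j} ∪
      {w | ∃ i j k, (∑ l, Q i l * Q j l * Q k l) ≠ 0 ∧
        w = FreeGroup.of i * FreeGroup.of j * FreeGroup.of k}) :
    Nonempty (PresentedGroup rels ≃* Multiplicative (ZMod N)) := by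
  have hprim : IsPrimitiveRoot ξ N := by
    rw [hξ]; exact Complex.isPrimitiveRoot_exp N (NeZero.ne N)
  have hord : ξ ^ N = 1 := hprim.pow_eq_one
  have hNpos : 0 < N := Nat.pos_of_ne_zero (NeZero.ne N)
  have hs : (Real.sqrt N : ℂ) ≠ 0 := by
    rw [Complex.ofReal_ne_zero]
    exact Real.sqrt_ne_zero'.mpr (by exact_mod_cast hNpos)
  -- characterizations of the three sums
  have h1 : ∀ i : ZMod N, (∑ l, Q i l) ≠ 0 ↔ i = 0 := by
    intro i
    have he : (∑ l, Q i l) = (∑ l : ZMod N, ξ ^ (i * l).val) / (Real.sqrt N : ℂ) := by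
      rw [Finset.sum_div]
      exact Finset.sum_congr rfl fun l _ => by rw [hQ]
    rw [he, div_ne_zero_iff, and_iff_left hs, stmt16_key N ξ hξ]
  have h2 : ∀ i j : ZMod N, (∑ l, Q i l * Q j l) ≠ 0 ↔ i + j = 0 := by
    intro i j
    have he : (∑ l, Q i l * Q j l)
        = (∑ l : ZMod N, ξ ^ ((i + j) * l).val) / ((Real.sqrt N : ℂ) * Real.sqrt N) := by
      rw [Finset.sum_div]
      refine Finset.sum_congr rfl fun l _ => ?_
      rw [hQ, hQ, div_mul_div_comm, stmt16_chi N ξ hord]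
      congr 2
      rw [← add_mul]
    rw [he, div_ne_zero_iff, and_iff_left (mul_ne_zero hs hs), stmt16_key N ξ hξ]
  have h3 : ∀ i j k : ZMod N, (∑ l, Q i l * Q j l * Q k l) ≠ 0 ↔ i + j + k = 0 := by
    intro i j k
    have he : (∑ l, Q i l * Q j l * Q k l)
        = (∑ l : ZMod N, ξ ^ ((i + j + k) * l).val)
          / ((Real.sqrt N : ℂ) * Real.sqrt N * Real.sqrt N) := by
      rw [Finset.sum_div]
      refine Finset.sum_congr rfl fun l _ => ?_
      rw [hQ, hQ, hQ, div_mul_div_comm, div_mul_div_comm,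
        stmt16_chi N ξ hord, stmt16_chi N ξ hord]
      congr 2
      rw [← add_mul, ← add_mul]
    rw [he, div_ne_zero_iff, and_iff_left (mul_ne_zero (mul_ne_zero hs hs) hs),
      stmt16_key N ξ hξ]
  -- membership facts
  have hmem1 : FreeGroup.of (0 : ZMod N) ∈ rels := by
    rw [hrels]
    exact Or.inl (Or.inl ⟨0, (h1 0).mpr rfl, rfl⟩)
  have hmem2 : ∀ x : ZMod N, FreeGroup.of x * FreeGroup.of (-x) ∈ rels := by
    intro x
    rw [hrels]
    exact Or.inl (Or.inr ⟨x, -x, (h2 x (-x)).mpr (by ring), rfl⟩)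
  have hmem3 : ∀ x y : ZMod N,
      FreeGroup.of x * FreeGroup.of y * FreeGroup.of (-(x + y)) ∈ rels := by
    intro x y
    rw [hrels]
    exact Or.inr ⟨x, y, -(x + y), (h3 x y (-(x + y))).mpr (by ring), rfl⟩
  have hone : ∀ r ∈ rels, PresentedGroup.mk rels r = 1 := fun r hr =>
    (QuotientGroup.eq_one_iff r).mpr (Subgroup.subset_normalClosure hr)
  have hzero : (PresentedGroup.of (0 : ZMod N) : PresentedGroup rels) = 1 := hone _ hmem1
  have hpair : ∀ x : ZMod N,
      (PresentedGroup.of x : PresentedGroup rels) * PresentedGroup.of (-x) = 1 := by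
    intro x
    have := hone _ (hmem2 x)
    rwa [map_mul] at this
  have hadd : ∀ x y : ZMod N,
      (PresentedGroup.of x : PresentedGroup rels) * PresentedGroup.of y
        = PresentedGroup.of (x + y) := by
    intro x y
    have ht := hone _ (hmem3 x y)
    rw [map_mul, map_mul] at ht
    have h4 : (PresentedGroup.of x : PresentedGroup rels) * PresentedGroup.of y
        = (PresentedGroup.of (-(x + y)))⁻¹ := eq_inv_of_mul_eq_one_left ht
    have h5 : (PresentedGroup.of (x + y) : PresentedGroup rels)
        = (PresentedGroup.of (-(x + y)))⁻¹ := eq_inv_of_mul_eq_one_left (hpair (x + y))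
    rw [h4, ← h5]
  -- the homomorphism to `Multiplicative (ZMod N)`
  have hlift : ∀ r ∈ rels,
      FreeGroup.lift (fun i : ZMod N => Multiplicative.ofAdd i) r = 1 := by
    intro r hr
    rw [hrels] at hr
    rcases hr with (⟨i, hi, rfl⟩ | ⟨i, j, hij, rfl⟩) | ⟨i, j, k, hijk, rfl⟩
    · have : i = 0 := (h1 i).mp hi
      simp [this]
    · have hij0 : i + j = 0 := (h2 i j).mp hij
      simp only [map_mul, FreeGroup.lift_apply_of, ← ofAdd_add, hij0, ofAdd_zero]
    · have hijk0 : i + j + k = 0 := (h3 i j k).mp hijk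
      simp only [map_mul, FreeGroup.lift_apply_of, ← ofAdd_add, hijk0, ofAdd_zero]
  let φ : PresentedGroup rels →* Multiplicative (ZMod N) := PresentedGroup.toGroup hlift
  let e : Multiplicative (ZMod N) →* PresentedGroup rels :=
    MonoidHom.mk' (fun x => PresentedGroup.of (Multiplicative.toAdd x))
      (fun a b => (hadd _ _).symm)
  refine ⟨MonoidHom.toMulEquiv φ e ?_ ?_⟩
  · ext x
    simp only [MonoidHom.comp_apply, MonoidHom.id_apply]
    show e (φ (PresentedGroup.of x)) = PresentedGroup.of x
    rw [show φ (PresentedGroup.of x) = Multiplicative.ofAdd x from PresentedGroup.toGroup.of hlift]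
    rfl
  · ext x
    show φ (PresentedGroup.of (Multiplicative.toAdd x)) = x
    rw [show φ (PresentedGroup.of (Multiplicative.toAdd x))
      = Multiplicative.ofAdd (Multiplicative.toAdd x) from PresentedGroup.toGroup.of hlift]
    rfl
end
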